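/- For q ∈ X^#, q belongs to the closure of K(X^#) = ⋃{M : M minimal closed invariant subset of X^#} if and only if every member Q of q is prethick in X (i.e., B(Q,r) is thick for some r ≥ 0). -/

import Mathlib

open Metric Bornology Set

variable {X : Type*} [MetricSpace X]

/-- `B(A,r) = ⋃_{a∈A} B(a,r)` where `B(a,r)` is the closed ball of radius `r`. -/
def ballU (A : Set X) (r : ℝ) : Set X := ⋃ a ∈ A, Metric.closedBall a r

/-- `X^#`: the set of ultrafilters on `X` all of whose members are unbounded. -/
def sharp (X : Type*) [MetricSpace X] : Set (Ultrafilter X) :=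
  {p | ∀ P ∈ p, ¬ Bornology.IsBounded P}

/-- Parallelity: `p ∥ q` iff there is `r ≥ 0` with `B(Q,r) ∈ p` for every `Q ∈ q`. -/
def Par (p q : Ultrafilter X) : Prop :=
  ∃ r : ℝ, 0 ≤ r ∧ ∀ Q ∈ q, ballU Q r ∈ p

/-- `p̆ = {q ∈ X^# : q ∥ p}`. -/
def pbreve (p : Ultrafilter X) : Set (Ultrafilter X) :=
  {q | q ∈ sharp X ∧ Par q p}

/-- The `p`-companion `Δ_p(Y) = {q ∈ X^# : Y ∈ q, q ∥ p}`. -/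
def Delta (p : Ultrafilter X) (Y : Set X) : Set (Ultrafilter X) :=
  {q | q ∈ sharp X ∧ Y ∈ q ∧ Par q p}

/-- A set `S ⊆ X^#` is invariant if `p ∈ S`, `q ∈ X^#`, `q ∥ p` imply `q ∈ S`. -/
def Invt (S : Set (Ultrafilter X)) : Prop :=
  ∀ p ∈ S, ∀ q, q ∈ sharp X → Par q p → q ∈ S

/-- `Y` is large if `X = B(Y,r)` for some `r ≥ 0`. -/
def Large (Y : Set X) : Prop := ∃ r : ℝ, 0 ≤ r ∧ ballU Y r = Set.univ

/-- `Y` is thick if for every `r ≥ 0` there is `y ∈ Y` with `B(y,r) ⊆ Y`. -/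
def Thick (Y : Set X) : Prop := ∀ r : ℝ, 0 ≤ r → ∃ y ∈ Y, Metric.closedBall y r ⊆ Y

/-- `Y` is prethick if `B(Y,r)` is thick for some `r ≥ 0`. -/
def Prethick (Y : Set X) : Prop := ∃ r : ℝ, 0 ≤ r ∧ Thick (ballU Y r)

/-- `Y` is small if `(X∖Y) ∩ L` is large for every large `L`. -/
def SmallSet (Y : Set X) : Prop := ∀ L : Set X, Large L → Large (Yᶜ ∩ L)

/-- `Y` is thin if for each `r ≥ 0` there is a bounded `V` with
`B(y,r) ∩ Y = {y}` for all `y ∈ Y∖V`. -/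
def Thin (Y : Set X) : Prop :=
  ∀ r : ℝ, 0 ≤ r → ∃ V : Set X, Bornology.IsBounded V ∧
    ∀ y ∈ Y \ V, Metric.closedBall y r ∩ Y = {y}

/-- `Y` is `n`-thin if for each `r ≥ 0` there is a bounded `V` with
`|B(y,r) ∩ Y| ≤ n` for all `y ∈ Y∖V`. -/
def NThin (n : ℕ) (Y : Set X) : Prop :=
  ∀ r : ℝ, 0 ≤ r → ∃ V : Set X, Bornology.IsBounded V ∧
    ∀ y ∈ Y \ V, (Metric.closedBall y r ∩ Y).encard ≤ n

/-- `M` is a minimal nonempty closed invariant subset of `X^#`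
(closures/closedness taken in the Stone topology on ultrafilters). -/
def MinCI (M : Set (Ultrafilter X)) : Prop :=
  M ⊆ sharp X ∧ M.Nonempty ∧ IsClosed M ∧ Invt M ∧
    ∀ S ⊆ M, S.Nonempty → IsClosed S → Invt S → S = M

lemma mem_ballU {A : Set X} {r : ℝ} {x : X} : x ∈ ballU A r ↔ ∃ a ∈ A, dist x a ≤ r := by
  simp [ballU, Metric.mem_closedBall]

lemma subset_ballU {A : Set X} {r : ℝ} (hr : 0 ≤ r) : A ⊆ ballU A r := fun x hx =>
  mem_ballU.2 ⟨x, hx, by simp [hr]⟩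

lemma ballU_mono {A : Set X} {r s : ℝ} (h : r ≤ s) : ballU A r ⊆ ballU A s := by
  intro x hx; rcases mem_ballU.1 hx with ⟨a, ha, hd⟩; exact mem_ballU.2 ⟨a, ha, hd.trans h⟩

lemma ballU_ballU {A : Set X} {r s : ℝ} : ballU (ballU A r) s ⊆ ballU A (r + s) := by
  intro x hx
  rcases mem_ballU.1 hx with ⟨b, hb, hd⟩
  rcases mem_ballU.1 hb with ⟨a, ha, hd'⟩
  exact mem_ballU.2 ⟨a, ha, (dist_triangle x b a).trans (by linarith)⟩

lemma isBounded_ballU {A : Set X} {r : ℝ} (hA : IsBounded A) : IsBounded (ballU A r) := by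
  rcases A.eq_empty_or_nonempty with rfl | ⟨c, hc⟩
  · simp [ballU]
  · rcases hA.subset_closedBall c with ⟨R, hR⟩
    refine (isBounded_closedBall (x := c) (r := R + r)).subset ?_
    intro x hx
    rcases mem_ballU.1 hx with ⟨a, ha, hd⟩
    have := hR ha
    simp only [Metric.mem_closedBall] at this ⊢
    calc dist x c ≤ dist x a + dist a c := dist_triangle _ _ _
    _ ≤ R + r := by linarith

lemma par_symm_aux {p q : Ultrafilter X} {r : ℝ}
    (h : ∀ Q ∈ q, ballU Q r ∈ p) : ∀ P ∈ p, ballU P r ∈ q := by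
  intro P hP
  by_contra hc
  have h1 : (ballU P r)ᶜ ∈ q := Ultrafilter.compl_mem_iff_notMem.2 hc
  have h2 : ballU (ballU P r)ᶜ r ∈ p := h _ h1
  rcases (Ultrafilter.nonempty_of_mem (p.inter_mem hP h2)) with ⟨x, hxP, hx2⟩
  rcases mem_ballU.1 hx2 with ⟨z, hz, hd⟩
  exact hz (mem_ballU.2 ⟨x, hxP, by rwa [dist_comm]⟩)

lemma Par.symm {p q : Ultrafilter X} (h : Par p q) : Par q p := by
  rcases h with ⟨r, hr, h⟩
  exact ⟨r, hr, par_symm_aux h⟩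

lemma Par.refl (p : Ultrafilter X) : Par p p :=
  ⟨0, le_refl _, fun Q hQ => p.sets_of_superset hQ (subset_ballU le_rfl)⟩

lemma Par.trans {p q w : Ultrafilter X} (h1 : Par p q) (h2 : Par q w) : Par p w := by
  rcases h1 with ⟨r, hr, h1⟩
  rcases h2 with ⟨s, hs, h2⟩
  refine ⟨s + r, by linarith, fun W hW => ?_⟩
  exact p.sets_of_superset (h1 _ (h2 _ hW)) ballU_ballU

lemma move_lemma {p : Ultrafilter X} (hp : p ∈ sharp X) {f : X → X} {r : ℝ} (hr : 0 ≤ r)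
    (hf : ∀ x, dist (f x) x ≤ r) :
    (p.map f) ∈ sharp X ∧ Par (p.map f) p ∧ Par p (p.map f) := by
  have hsh : (p.map f) ∈ sharp X := by
    intro P' hP' hb
    have h1 : f ⁻¹' P' ∈ p := Ultrafilter.mem_map.1 hP'
    refine hp _ h1 ((isBounded_ballU hb (r := r)).subset ?_)
    intro x hx
    exact mem_ballU.2 ⟨f x, hx, by rw [dist_comm]; exact hf x⟩
  have hpar : Par (p.map f) p := by
    refine ⟨r, hr, fun P hP => ?_⟩
    refine Ultrafilter.mem_map.2 (p.sets_of_superset hP ?_)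
    intro x hx
    exact mem_ballU.2 ⟨x, hx, hf x⟩
  exact ⟨hsh, hpar, hpar.symm⟩

lemma companion {p : Ultrafilter X} (hp : p ∈ sharp X) {A : Set X} {r : ℝ} (hr : 0 ≤ r)
    (hA : ballU A r ∈ p) : ∃ p', p' ∈ sharp X ∧ A ∈ p' ∧ Par p' p := by
  classical
  set f : X → X := fun x => if h : x ∈ ballU A r then (mem_ballU.1 h).choose else x with hfdef
  have hf : ∀ x, dist (f x) x ≤ r := by
    intro x
    by_cases h : x ∈ ballU A r
    · simp only [hfdef, dif_pos h]
      have := (mem_ballU.1 h).choose_spec.2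
      rwa [dist_comm]
    · simp [hfdef, dif_neg h, hr]
  obtain ⟨hsh, hpar, _⟩ := move_lemma hp hr hf
  refine ⟨p.map f, hsh, ?_, hpar⟩
  refine Ultrafilter.mem_map.2 (p.sets_of_superset hA ?_)
  intro x hx
  simp only [Set.mem_preimage, hfdef, dif_pos hx]
  exact (mem_ballU.1 hx).choose_spec.1

lemma sharp_isClosed : IsClosed (sharp X) := by
  have : sharp X = ⋂ (B : Set X) (_ : IsBounded B), {p : Ultrafilter X | B ∈ p}ᶜ := by
    ext p
    simp only [Set.mem_iInter, Set.mem_compl_iff, Set.mem_setOf_eq, sharp]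
    exact ⟨fun h B hB hBp => h B hBp hB, fun h P hP hb => h P hb hP⟩
  rw [this]
  exact isClosed_iInter fun B => isClosed_iInter fun _ => (ultrafilter_isOpen_basic B).isClosed_compl

lemma mem_closure_ultra {S : Set (Ultrafilter X)} {q : Ultrafilter X} :
    q ∈ closure S ↔ ∀ Q ∈ q, ∃ p ∈ S, Q ∈ p := by
  rw [ultrafilterBasis_is_basis.mem_closure_iff]
  constructor
  · intro h Q hQ
    rcases h {p | Q ∈ p} ⟨Q, rfl⟩ hQ with ⟨p, hp1, hp2⟩
    exact ⟨p, hp2, hp1⟩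
  · rintro h o ⟨Q, rfl⟩ hQ
    rcases h Q hQ with ⟨p, hp1, hp2⟩
    exact ⟨p, hp2, hp1⟩

lemma invt_closure {S : Set (Ultrafilter X)} (hS : S ⊆ sharp X) (h : Invt S) :
    Invt (closure S) := by
  intro p hp q' hq' hpar
  rw [mem_closure_ultra]
  intro Q' hQ'
  rcases hpar.symm with ⟨s, hs, hpar'⟩
  have h1 : ballU Q' s ∈ p := hpar' _ hQ'
  rcases mem_closure_ultra.1 hp _ h1 with ⟨p₁, hp₁S, hp₁⟩
  rcases companion (hS hp₁S) hs hp₁ with ⟨p', hp'sh, hQp', hp'par⟩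
  exact ⟨p', h _ hp₁S _ hp'sh hp'par, hQp'⟩

lemma exists_min {C : Set (Ultrafilter X)} (hC : C ⊆ sharp X) (hne : C.Nonempty)
    (hcl : IsClosed C) (hinv : Invt C) : ∃ M, MinCI M ∧ M ⊆ C := by
  set 𝒮 : Set (Set (Ultrafilter X)) :=
    {S | S ⊆ C ∧ S.Nonempty ∧ IsClosed S ∧ Invt S} with h𝒮
  obtain ⟨M, hMC, hM𝒮, hMmin⟩ : ∃ M, M ⊆ C ∧ M ∈ 𝒮 ∧ ∀ a ∈ 𝒮, a ⊆ M → a = M := by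
    have H : ∀ c ⊆ 𝒮, IsChain (· ⊆ ·) c → c.Nonempty →
        ∃ lb ∈ 𝒮, ∀ s ∈ c, lb ⊆ s := by
      intro c hc hchain hcne
      refine ⟨⋂₀ c, ⟨?_, ?_, ?_, ?_⟩, fun s hs => sInter_subset_of_mem hs⟩
      · rcases hcne with ⟨s, hs⟩
        exact (sInter_subset_of_mem hs).trans (hc hs).1
      · have : Nonempty c := hcne.to_subtype
        refine IsCompact.nonempty_sInter_of_directed_nonempty_isCompact_isClosed
          (IsChain.directedOn (r := (· ⊇ ·)) (fun a ha b hb hab => (hchain ha hb hab).symm))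
          (fun U hU => (hc hU).2.1)
          (fun U hU => (hc hU).2.2.1.isCompact) (fun U hU => (hc hU).2.2.1)
      · exact isClosed_sInter fun U hU => (hc hU).2.2.1
      · intro p hp q hqsh hpar
        rw [mem_sInter] at hp ⊢
        intro U hU
        exact (hc hU).2.2.2 _ (hp _ hU) _ hqsh hpar
    obtain ⟨M, hMsub, hMmem, hMmin⟩ := zorn_superset_nonempty 𝒮 H C ⟨Subset.rfl, hne, hcl, hinv⟩
    exact ⟨M, hMsub, hMmem, fun a ha hsub => hsub.antisymm (hMmin ha hsub)⟩
  obtain ⟨hMC', hMne, hMcl, hMinv⟩ := hM𝒮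
  refine ⟨M, ⟨hMC'.trans hC, hMne, hMcl, hMinv, ?_⟩, hMC⟩
  intro S hSM hSne hScl hSinv
  exact hMmin S ⟨hSM.trans hMC', hSne, hScl, hSinv⟩ hSM

lemma minCI_prethick {M : Set (Ultrafilter X)} (hM : MinCI M)
    {p : Ultrafilter X} (hpM : p ∈ M) {Q : Set X} (hQ : Q ∈ p) : Prethick Q := by
  classical
  obtain ⟨hMsh, hMne, hMcl, hMinv, hMmin⟩ := hM
  have stepA : ∀ p'' ∈ M, ∃ n : ℕ, ballU Q n ∈ p'' := by
    intro p'' hp''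
    have hpb : pbreve p'' ⊆ M := fun q1 hq1 => hMinv _ hp'' _ hq1.1 hq1.2
    have hinv1 : Invt (closure (pbreve p'')) := invt_closure (fun q1 hq1 => hq1.1)
      (fun q1 hq1 q2 hq2 hpar => ⟨hq2, hpar.trans hq1.2⟩)
    have hne1 : (closure (pbreve p'')).Nonempty :=
      ⟨p'', subset_closure ⟨hMsh hp'', Par.refl p''⟩⟩
    have heq : closure (pbreve p'') = M :=
      hMmin _ (closure_minimal hpb hMcl) hne1 isClosed_closure hinv1
    have hp' : p ∈ closure (pbreve p'') := heq ▸ hpM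
    rcases mem_closure_ultra.1 hp' Q hQ with ⟨p₁, ⟨_, s, hs, hp₁par⟩, hQp₁⟩
    have hsQ : ballU Q s ∈ p'' := par_symm_aux hp₁par Q hQp₁
    exact ⟨⌈s⌉₊, p''.sets_of_superset hsQ (ballU_mono (Nat.le_ceil s))⟩
  obtain ⟨N, hN⟩ : ∃ N : ℕ, ∀ p'' ∈ M, ballU Q N ∈ p'' := by
    have hcov : M ⊆ ⋃ n : ℕ, {p'' : Ultrafilter X | ballU Q n ∈ p''} := by
      intro p'' hp''; rcases stepA p'' hp'' with ⟨n, hn⟩; exact mem_iUnion.2 ⟨n, hn⟩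
    obtain ⟨t, ht⟩ :=
      hMcl.isCompact.elim_finite_subcover _ (fun n : ℕ => ultrafilter_isOpen_basic _) hcov
    rcases t.eq_empty_or_nonempty with rfl | htne
    · exfalso
      rcases hMne with ⟨p₀, hp₀⟩
      simpa using ht hp₀
    · refine ⟨t.max' htne, fun p'' hp'' => ?_⟩
      rcases mem_iUnion₂.1 (ht hp'') with ⟨n, hnt, hn⟩
      refine p''.sets_of_superset hn (ballU_mono ?_)
      exact_mod_cast t.le_max' n hnt
  refine ⟨N, Nat.cast_nonneg N, ?_⟩
  intro t ht
  by_contra hcon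
  have hexz : ∀ yy : X, ∃ z, dist z yy ≤ t ∧ z ∉ ballU Q N := by
    intro yy
    by_cases hy : yy ∈ ballU Q N
    · rcases Set.not_subset.1 (fun hsub => hcon ⟨yy, hy, hsub⟩) with ⟨z, hz1, hz2⟩
      exact ⟨z, Metric.mem_closedBall.1 hz1, hz2⟩
    · exact ⟨yy, by simp [ht], hy⟩
  choose f hf1 hf2 using hexz
  obtain ⟨hsh, hpar, _⟩ := move_lemma (hMsh hpM) ht hf1
  have hmem : p.map f ∈ M := hMinv _ hpM _ hsh hpar
  have h1 : ballU Q N ∈ p.map f := hN _ hmem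
  have h2 : (ballU Q N)ᶜ ∈ p.map f := by
    refine Ultrafilter.mem_map.2 (p.sets_of_superset Filter.univ_mem ?_)
    intro x _
    exact hf2 x
  exact (Ultrafilter.compl_mem_iff_notMem.1 h2) h1

lemma thick_ultra (hX : ¬ IsBounded (Set.univ : Set X)) {T : Set X} (hT : Thick T) :
    ∃ u : Ultrafilter X, u ∈ sharp X ∧ ∀ n : ℕ, {x | Metric.closedBall x (n : ℝ) ⊆ T} ∈ u := by
  classical
  have hXne : Nonempty X := by
    by_contra h'
    exact hX (by rw [Set.univ_eq_empty_iff.2 (not_nonempty_iff.1 h')]; exact isBounded_empty)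
  set x₀ : X := Classical.arbitrary X with hx₀
  have key : ∀ n : ℕ, ∃ y, (n : ℝ) < dist y x₀ ∧ Metric.closedBall y n ⊆ T := by
    intro n
    by_contra hcon
    push_neg at hcon
    have hTuniv : T = univ := by
      apply eq_univ_of_forall
      intro z
      obtain ⟨y, _, hsub⟩ := hT ((n : ℝ) + dist z x₀) (by positivity)
      have h1 : Metric.closedBall y n ⊆ T :=
        (Metric.closedBall_subset_closedBall (by linarith [dist_nonneg (x := z) (y := x₀)])).trans hsub
      have h2 : dist y x₀ ≤ n := by
        by_contra h2
        exact hcon y (lt_of_not_ge h2) h1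
      apply hsub
      rw [Metric.mem_closedBall]
      calc dist z y ≤ dist z x₀ + dist x₀ y := dist_triangle _ _ _
        _ ≤ (n : ℝ) + dist z x₀ := by
            have hxy : dist x₀ y ≤ (n : ℝ) := by rw [dist_comm]; exact h2
            linarith
    apply hX
    refine (Metric.isBounded_closedBall (x := x₀) (r := n)).subset ?_
    intro y _
    rw [Metric.mem_closedBall]
    by_contra h3
    exact hcon y (lt_of_not_ge h3) (by rw [hTuniv]; exact subset_univ _)
  choose y hy1 hy2 using key
  set u : Ultrafilter X := Ultrafilter.map y (Ultrafilter.of Filter.atTop) with hu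
  have tail : ∀ n : ℕ, {k : ℕ | n ≤ k} ∈ Ultrafilter.of (Filter.atTop : Filter ℕ) :=
    fun n => (Ultrafilter.of_le _) (Filter.mem_atTop n)
  refine ⟨u, ?_, ?_⟩
  · intro U hU hb
    rcases hb.subset_closedBall x₀ with ⟨R, hR⟩
    set n : ℕ := ⌈R⌉₊ + 1
    have h1 : y ⁻¹' U ∈ Ultrafilter.of (Filter.atTop : Filter ℕ) := Ultrafilter.mem_map.1 hU
    rcases Ultrafilter.nonempty_of_mem (Filter.inter_mem h1 (tail n)) with ⟨k, hkU, hkn⟩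
    have h3 : dist (y k) x₀ ≤ R := Metric.mem_closedBall.1 (hR hkU)
    have h4 : (k : ℝ) < dist (y k) x₀ := hy1 k
    have h5 : (n : ℝ) ≤ k := by exact_mod_cast hkn
    have h6 : R ≤ (⌈R⌉₊ : ℝ) := Nat.le_ceil R
    have : ((⌈R⌉₊ : ℕ) : ℝ) + 1 ≤ (k : ℝ) := by
      have h5' : ((⌈R⌉₊ + 1 : ℕ) : ℝ) ≤ k := h5
      push_cast at h5' ⊢; linarith
    linarith
  · intro n
    refine Ultrafilter.mem_map.2 ((Ultrafilter.of _).sets_of_superset (tail n) ?_)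
    intro k hk
    simp only [Set.mem_preimage, Set.mem_setOf_eq]
    refine (Metric.closedBall_subset_closedBall ?_).trans (hy2 k)
    exact_mod_cast hk

theorem stmt6 (hX : ¬ Bornology.IsBounded (Set.univ : Set X))
    (q : Ultrafilter X) (hq : q ∈ sharp X) :
    q ∈ closure {q' : Ultrafilter X | ∃ M : Set (Ultrafilter X), MinCI M ∧ q' ∈ M} ↔
      ∀ Q ∈ q, Prethick Q := by
  constructor
  · intro h Q hQ
    rcases mem_closure_ultra.1 h Q hQ with ⟨p, ⟨M, hM, hpM⟩, hQp⟩
    exact minCI_prethick hM hpM hQp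
  · intro h
    rw [mem_closure_ultra]
    intro Q hQ
    obtain ⟨r, hr, hT⟩ := h Q hQ
    obtain ⟨u, hush, hun⟩ := thick_ultra hX hT
    have hpbsh : pbreve u ⊆ sharp X := fun q1 hq1 => hq1.1
    have hpbinv : Invt (pbreve u) := fun q1 hq1 q2 hq2 hpar => ⟨hq2, hpar.trans hq1.2⟩
    have hCsh : closure (pbreve u) ⊆ sharp X := closure_minimal hpbsh sharp_isClosed
    have hCne : (closure (pbreve u)).Nonempty := ⟨u, subset_closure ⟨hush, Par.refl u⟩⟩
    have hCinv : Invt (closure (pbreve u)) := invt_closure hpbsh hpbinv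
    obtain ⟨M, hM, hMC⟩ := exists_min hCsh hCne isClosed_closure hCinv
    have hTall : ∀ q' ∈ closure (pbreve u), ballU Q r ∈ q' := by
      have hTpb : pbreve u ⊆ {p : Ultrafilter X | ballU Q r ∈ p} := by
        rintro q' ⟨_, s, hs, hpar⟩
        have h1 : ballU {x | Metric.closedBall x ((⌈s⌉₊ : ℕ) : ℝ) ⊆ ballU Q r} s ∈ q' :=
          hpar _ (hun ⌈s⌉₊)
        refine q'.sets_of_superset h1 ?_
        intro x hx
        rcases mem_ballU.1 hx with ⟨a, ha, hd⟩
        exact ha (Metric.mem_closedBall.2 (hd.trans (Nat.le_ceil s)))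
      intro q' hq'
      exact closure_minimal hTpb (ultrafilter_isClosed_basic _) hq'
    rcases hM.2.1 with ⟨p₀, hp₀⟩
    have hTp₀ : ballU Q r ∈ p₀ := hTall p₀ (hMC hp₀)
    obtain ⟨p', hp'sh, hQp', hp'par⟩ := companion (hM.1 hp₀) hr hTp₀
    exact ⟨p', ⟨M, hM, hM.2.2.2.1 _ hp₀ _ hp'sh hp'par⟩, hQp'⟩
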